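/- Let G = (L ∪ R, E) be a bipartite graph in which every vertex of L has degree exactly d_L and every vertex of R has degree exactly d_R, with d_R ≥ log₂(2|R|) > 0. Then there exists a subset of E that is a union of vertex-disjoint stars with centers in L, each star having at least d_L / (4·log₂(2|R|)) leaves, such that every vertex of R is a leaf of some star. -/
import Mathlib

open Finset

/-- Expanding a product of binomials over a finite index type as a sum over subsets. -/
lemma aa_weight_sum {L : Type*} [Fintype L] [DecidableEq L] (p : ℝ) (h : L → ℝ) :
    ∑ S : Finset L, ((∏ u ∈ S, p * h u) * ∏ _u ∈ Sᶜ, (1 - p)) = ∏ u, (p * h u + (1 - p)) :=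
  (Fintype.prod_add _ _).symm

set_option maxHeartbeats 1000000 in
/-- Alon–Alweiss Lemma 2.1: in a biregular bipartite graph with `L`-degree `d_L`,
`R`-degree `d_R ≥ log₂(2|R|) > 0`, there is a union of vertex-disjoint stars with
centers in `L`, each with at least `d_L / (4 log₂(2|R|))` leaves, covering all of `R`. -/
theorem stmt14 {L R : Type*} [Fintype L] [Fintype R]
    (Adj : L → R → Prop) [∀ u r, Decidable (Adj u r)]
    (dL dR : ℕ)
    (hdL : ∀ u : L, (Finset.univ.filter fun r => Adj u r).card = dL)
    (hdR : ∀ r : R, (Finset.univ.filter fun u => Adj u r).card = dR)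
    (hpos : 0 < Real.logb 2 (2 * Fintype.card R))
    (hlog : Real.logb 2 (2 * Fintype.card R) ≤ (dR : ℝ)) :
    ∃ f : R → L, (∀ r, Adj (f r) r) ∧
      ∀ u : L, u ∈ Set.range f →
        (dL : ℝ) / (4 * Real.logb 2 (2 * Fintype.card R)) ≤ (Nat.card {r : R // f r = u} : ℝ) := by
  classical
  have hm1 : 1 ≤ Fintype.card R := by
    by_contra h
    have h0 : Fintype.card R = 0 := by omega
    rw [h0] at hpos
    norm_num [Real.logb] at hpos
  set m : ℕ := Fintype.card R with hm_def
  set lam : ℝ := Real.logb 2 (2 * m) with hlam_def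
  have hmR : (1:ℝ) ≤ (m:ℝ) := by exact_mod_cast hm1
  have h2m_pos : (0:ℝ) < 2 * m := by linarith
  have hlam1 : (1:ℝ) ≤ lam := by
    calc (1:ℝ) = Real.logb 2 2 := by simp
    _ ≤ lam := Real.logb_le_logb_of_le (by norm_num) (by norm_num) (by linarith)
  have hdR1 : 1 ≤ dR := by
    by_contra h
    have h0 : dR = 0 := by omega
    rw [h0] at hlog
    push_cast at hlog
    linarith
  have hdRR : (0:ℝ) < dR := by exact_mod_cast hdR1
  have h2lam : (2:ℝ) ^ lam = 2 * m := Real.rpow_logb (by norm_num) (by norm_num) h2m_pos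
  set N : R → Finset L := fun r => Finset.univ.filter (fun u => Adj u r) with hN_def
  have hN_app : ∀ r, N r = Finset.univ.filter (fun u => Adj u r) := fun _ => rfl
  have hNcard : ∀ r, (N r).card = dR := hdR
  by_cases hcase : (dL : ℝ) ≤ 4 * lam
  · -- trivial case: the bound is at most 1, pick any neighbour
    have hex : ∀ r : R, ∃ u, Adj u r := by
      intro r
      have hne : (N r).Nonempty := by
        rw [← Finset.card_pos, hNcard r]; omega
      obtain ⟨u, hu⟩ := hne
      rw [hN_app r, Finset.mem_filter] at hu
      exact ⟨u, hu.2⟩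
    refine ⟨fun r => (hex r).choose, fun r => (hex r).choose_spec, ?_⟩
    rintro u ⟨r₀, hr₀⟩
    have hne : Nonempty {r : R // (hex r).choose = u} := ⟨⟨r₀, hr₀⟩⟩
    have hpos' : 0 < Nat.card {r : R // (hex r).choose = u} := Nat.card_pos
    have h1 : (1:ℝ) ≤ (Nat.card {r : R // (hex r).choose = u} : ℝ) := by exact_mod_cast hpos'
    have h2 : (dL : ℝ) / (4 * lam) ≤ 1 := by
      rw [div_le_one (by linarith)]
      exact hcase
    linarith
  · -- main case
    push_neg at hcase
    set s : ℕ := ⌈(dL : ℝ) / (4 * lam)⌉₊ with hs_def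
    have hs_lb : (dL : ℝ) / (4 * lam) ≤ (s : ℝ) := Nat.le_ceil _
    have hdiv_pos : 0 < (dL : ℝ) / (4 * lam) := div_pos (by linarith) (by linarith)
    have hs_ub : (s : ℝ) < (dL : ℝ) / (4 * lam) + 1 := Nat.ceil_lt_add_one (le_of_lt hdiv_pos)
    have hs_pos : 0 < s := Nat.ceil_pos.mpr hdiv_pos
    set d' : ℕ := dL / s with hd'_def
    have hsd' : s * d' ≤ dL := Nat.mul_div_le dL s
    have hdLlt : dL < s * (d' + 1) := Nat.lt_mul_div_succ dL hs_pos
    have h2lam_s : 2 * lam * s < (dL : ℝ) := by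
      have h1 : 2 * lam * (s:ℝ) < 2 * lam * ((dL : ℝ) / (4 * lam) + 1) :=
        mul_lt_mul_of_pos_left hs_ub (by linarith)
      have h2 : 2 * lam * ((dL : ℝ) / (4 * lam)) = (dL : ℝ) / 2 := by
        field_simp; ring
      have h3 : 2 * lam * ((dL : ℝ) / (4 * lam) + 1) = (dL:ℝ)/2 + 2*lam := by
        rw [mul_add, h2]; ring
      rw [h3] at h1
      linarith
    have hd'1 : 2 * lam ≤ (d' : ℝ) + 1 := by
      have hcast : (dL : ℝ) < (s : ℝ) * ((d' : ℝ) + 1) := by exact_mod_cast hdLlt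
      have hspos' : (0:ℝ) < (s:ℝ) := by exact_mod_cast hs_pos
      nlinarith [h2lam_s]
    have hd'_pos : 0 < d' := by
      have h1 : (1:ℝ) ≤ (d':ℝ) := by linarith
      have h2 : 1 ≤ d' := by exact_mod_cast h1
      omega
    -- probability parameter
    set p : ℝ := lam * Real.log 2 / dR with hp_def
    have hlog2_pos : (0:ℝ) < Real.log 2 := Real.log_pos (by norm_num)
    have hp_pos : 0 < p := div_pos (mul_pos (by linarith) hlog2_pos) hdRR
    have hp_lt1 : p < 1 := by
      have h1 : lam * Real.log 2 ≤ (dR:ℝ) * Real.log 2 :=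
        mul_le_mul_of_nonneg_right hlog hlog2_pos.le
      have h2 : Real.log 2 < 1 := by
        have := Real.log_lt_sub_one_of_pos (x := 2) (by norm_num) (by norm_num)
        linarith
      rw [hp_def, div_lt_one hdRR]
      calc lam * Real.log 2 ≤ (dR:ℝ) * Real.log 2 := h1
      _ < (dR:ℝ) * 1 := mul_lt_mul_of_pos_left h2 hdRR
      _ = dR := by ring
    have hpdR : p * dR = lam * Real.log 2 := by
      rw [hp_def]; field_simp
    have hexp_pdR : Real.exp (p * dR) = 2 * m := by
      rw [hpdR, ← h2lam, Real.rpow_def_of_pos (by norm_num : (0:ℝ) < 2)]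
      ring_nf
    -- the weight function
    set w : Finset L → ℝ := fun S => (∏ _u ∈ S, p) * ∏ _u ∈ Sᶜ, (1 - p) with hw_def
    have hw_app : ∀ S, w S = (∏ _u ∈ S, p) * ∏ _u ∈ Sᶜ, (1 - p) := fun _ => rfl
    have hw_nonneg : ∀ S, 0 ≤ w S := by
      intro S
      rw [hw_app]
      apply mul_nonneg
      · exact Finset.prod_nonneg (fun _ _ => hp_pos.le)
      · exact Finset.prod_nonneg (fun _ _ => by linarith)
    have hw_sum : ∑ S : Finset L, w S = 1 := by
      have h := aa_weight_sum p (fun _ : L => (1:ℝ))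
      simp only [mul_one] at h
      have h2 : ∀ u : L, p + (1 - p) = (1:ℝ) := fun _ => by ring
      rw [Finset.sum_congr rfl (fun S _ => hw_app S), h,
        Finset.prod_congr rfl (fun u _ => h2 u), Finset.prod_const_one]
    -- expectation computations
    have hA : ∀ r : R, ∑ S : Finset L, w S * (if N r ∩ S = ∅ then (1:ℝ) else 0)
        = (1 - p) ^ dR := by
      intro r
      have key : ∀ S : Finset L, w S * (if N r ∩ S = ∅ then (1:ℝ) else 0)
          = (∏ u ∈ S, p * (if u ∈ N r then (0:ℝ) else 1)) * ∏ _u ∈ Sᶜ, (1 - p) := by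
        intro S
        have ind_eq : (if N r ∩ S = ∅ then (1:ℝ) else 0)
            = ∏ u ∈ S, (if u ∈ N r then (0:ℝ) else 1) := by
          by_cases h : N r ∩ S = ∅
          · rw [if_pos h]
            refine (Finset.prod_eq_one ?_).symm
            intro u hu
            rw [if_neg]
            intro hmem
            exact Finset.notMem_empty u (h ▸ Finset.mem_inter.mpr ⟨hmem, hu⟩)
          · rw [if_neg h]
            obtain ⟨u, hu⟩ := Finset.nonempty_iff_ne_empty.mpr h
            have hu1 : u ∈ N r := (Finset.mem_inter.mp hu).1
            have hu2 : u ∈ S := (Finset.mem_inter.mp hu).2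
            exact (Finset.prod_eq_zero hu2 (by rw [if_pos hu1])).symm
        rw [hw_app, ind_eq, Finset.prod_mul_distrib]
        ring
      rw [Finset.sum_congr rfl (fun S _ => key S), aa_weight_sum]
      have h2 : ∀ u : L, p * (if u ∈ N r then (0:ℝ) else 1) + (1 - p)
          = (if u ∈ N r then (1 - p) else 1) := by
        intro u
        by_cases h : u ∈ N r <;> simp [h]
      rw [Finset.prod_congr rfl (fun u _ => h2 u), Finset.prod_ite_mem,
        Finset.univ_inter, Finset.prod_const, hNcard r]
    have hB : ∀ r : R, ∑ S : Finset L, w S * (2:ℝ) ^ ((N r ∩ S).card)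
        = (1 + p) ^ dR := by
      intro r
      have key : ∀ S : Finset L, w S * (2:ℝ) ^ ((N r ∩ S).card)
          = (∏ u ∈ S, p * (if u ∈ N r then (2:ℝ) else 1)) * ∏ _u ∈ Sᶜ, (1 - p) := by
        intro S
        have pow_eq : (2:ℝ) ^ ((N r ∩ S).card)
            = ∏ u ∈ S, (if u ∈ N r then (2:ℝ) else 1) := by
          rw [Finset.prod_ite_mem, Finset.prod_const, Finset.inter_comm S (N r)]
        rw [hw_app, pow_eq, Finset.prod_mul_distrib]
        ring
      rw [Finset.sum_congr rfl (fun S _ => key S), aa_weight_sum]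
      have h2 : ∀ u : L, p * (if u ∈ N r then (2:ℝ) else 1) + (1 - p)
          = (if u ∈ N r then (1 + p) else 1) := by
        intro u
        by_cases h : u ∈ N r <;> simp [h] <;> ring
      rw [Finset.prod_congr rfl (fun u _ => h2 u), Finset.prod_ite_mem,
        Finset.univ_inter, Finset.prod_const, hNcard r]
    -- tail bounds
    have hA_lt : (1 - p) ^ dR < ((2 * m : ℝ))⁻¹ := by
      have h1 : (1 - p) < Real.exp (-p) := by
        have := Real.add_one_lt_exp (x := -p) (by linarith)
        linarith
      have h2 : (1 - p) ^ dR < (Real.exp (-p)) ^ dR := by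
        apply pow_lt_pow_left₀ h1 (by linarith)
        omega
      have h3 : (Real.exp (-p)) ^ dR = Real.exp (-(p * dR)) := by
        rw [← Real.exp_nat_mul]
        ring_nf
      rw [h3, Real.exp_neg, hexp_pdR] at h2
      exact h2
    have hB_le : (1 + p) ^ dR ≤ 2 * m := by
      have h1 : (1 + p) ≤ Real.exp p := by
        have := Real.add_one_le_exp p
        linarith
      have h2 : (1 + p) ^ dR ≤ (Real.exp p) ^ dR := pow_le_pow_left₀ (by linarith) h1 dR
      have h3 : (Real.exp p) ^ dR = Real.exp (p * dR) := by
        rw [← Real.exp_nat_mul]; ring_nf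
      rw [h3, hexp_pdR] at h2
      exact h2
    have c2pos : (0:ℝ) < (2:ℝ)^(d'+1:ℕ) := by positivity
    have h2pow_ge : ((2 * m : ℝ)) * (2 * m) ≤ (2:ℝ) ^ (d' + 1 : ℕ) := by
      have h1 : ((2:ℝ) ^ lam) * ((2:ℝ) ^ lam) = (2:ℝ) ^ (2 * lam) := by
        rw [← Real.rpow_add (by norm_num)]
        ring_nf
      have h2 : (2:ℝ) ^ (2 * lam) ≤ (2:ℝ) ^ ((d' + 1 : ℕ) : ℝ) := by
        apply Real.rpow_le_rpow_of_exponent_le (by norm_num)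
        push_cast
        linarith [hd'1]
      have h3 : (2:ℝ) ^ ((d' + 1 : ℕ) : ℝ) = (2:ℝ) ^ (d' + 1 : ℕ) := Real.rpow_natCast 2 _
      rw [h2lam] at h1
      rw [h3] at h2
      linarith [h1, h2]
    -- bad events
    set bad : R → Finset L → Prop := fun r S => N r ∩ S = ∅ ∨ d' < (N r ∩ S).card with hbad_def
    have hbad_app : ∀ r S, bad r S ↔ (N r ∩ S = ∅ ∨ d' < (N r ∩ S).card) := fun _ _ => Iff.rfl
    have hE : ∑ S : Finset L, w S * ((Finset.univ.filter (fun r => bad r S)).card : ℝ) < 1 := by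
      have step1 : ∀ S : Finset L, w S * ((Finset.univ.filter (fun r => bad r S)).card : ℝ)
          = ∑ r : R, w S * (if bad r S then (1:ℝ) else 0) := by
        intro S
        rw [← Finset.mul_sum]
        congr 1
        rw [Finset.card_filter]
        push_cast
        rfl
      rw [Finset.sum_congr rfl (fun S _ => step1 S), Finset.sum_comm]
      have per_r : ∀ r : R, ∑ S : Finset L, w S * (if bad r S then (1:ℝ) else 0)
          < ((m:ℝ))⁻¹ := by
        intro r
        have hub : ∀ S : Finset L, w S * (if bad r S then (1:ℝ) else 0)
            ≤ w S * (if N r ∩ S = ∅ then (1:ℝ) else 0)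
              + (w S * (2:ℝ)^((N r ∩ S).card)) * ((2:ℝ)^(d'+1:ℕ))⁻¹ := by
          intro S
          have hnn := hw_nonneg S
          have t1 : (0:ℝ) ≤ w S * (if N r ∩ S = ∅ then (1:ℝ) else 0) := by
            apply mul_nonneg hnn
            split <;> norm_num
          have t2 : (0:ℝ) ≤ (w S * (2:ℝ)^((N r ∩ S).card)) * ((2:ℝ)^(d'+1:ℕ))⁻¹ := by
            apply mul_nonneg (mul_nonneg hnn (by positivity)) (by positivity)
          by_cases hb : bad r S
          · rw [if_pos hb]
            rw [hbad_app] at hb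
            rcases hb with hb1 | hb2
            · rw [if_pos hb1]
              linarith
            · have h1 : (1:ℝ) ≤ (2:ℝ)^((N r ∩ S).card) * ((2:ℝ)^(d'+1:ℕ))⁻¹ := by
                rw [← div_eq_mul_inv, le_div_iff₀ c2pos, one_mul]
                apply pow_le_pow_right₀ (by norm_num) (by omega)
              have h2 : w S * 1 ≤ w S * ((2:ℝ)^((N r ∩ S).card) * ((2:ℝ)^(d'+1:ℕ))⁻¹) :=
                mul_le_mul_of_nonneg_left h1 hnn
              calc w S * 1 ≤ w S * ((2:ℝ)^((N r ∩ S).card) * ((2:ℝ)^(d'+1:ℕ))⁻¹) := h2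
                _ = (w S * (2:ℝ)^((N r ∩ S).card)) * ((2:ℝ)^(d'+1:ℕ))⁻¹ := by ring
                _ ≤ _ := le_add_of_nonneg_left t1
          · rw [if_neg hb, mul_zero]
            linarith
        have hsum1 : ∑ S : Finset L, (w S * (if N r ∩ S = ∅ then (1:ℝ) else 0)
              + (w S * (2:ℝ)^((N r ∩ S).card)) * ((2:ℝ)^(d'+1:ℕ))⁻¹)
            = (1-p)^dR + (1+p)^dR * ((2:ℝ)^(d'+1:ℕ))⁻¹ := by
          rw [Finset.sum_add_distrib, hA r, ← Finset.sum_mul, hB r]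
        have hstep2 : (1+p)^dR * ((2:ℝ)^(d'+1:ℕ))⁻¹ ≤ ((2*m:ℝ))⁻¹ := by
          have hmono : (1+p)^dR * ((2:ℝ)^(d'+1:ℕ))⁻¹ ≤ (2*m) * ((2:ℝ)^(d'+1:ℕ))⁻¹ :=
            mul_le_mul_of_nonneg_right hB_le (by positivity)
          have hkey : (2*m:ℝ) * ((2:ℝ)^(d'+1:ℕ))⁻¹ ≤ ((2*m:ℝ))⁻¹ := by
            rw [← div_eq_mul_inv, div_le_iff₀ c2pos, inv_mul_eq_div, le_div_iff₀ h2m_pos]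
            exact h2pow_ge
          linarith
        calc ∑ S : Finset L, w S * (if bad r S then (1:ℝ) else 0)
            ≤ ∑ S : Finset L, (w S * (if N r ∩ S = ∅ then (1:ℝ) else 0)
              + (w S * (2:ℝ)^((N r ∩ S).card)) * ((2:ℝ)^(d'+1:ℕ))⁻¹) :=
              Finset.sum_le_sum (fun S _ => hub S)
          _ = (1-p)^dR + (1+p)^dR * ((2:ℝ)^(d'+1:ℕ))⁻¹ := hsum1
          _ < ((2*m:ℝ))⁻¹ + ((2*m:ℝ))⁻¹ := add_lt_add_of_lt_of_le hA_lt hstep2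
          _ = ((m:ℝ))⁻¹ := by
              rw [← two_mul, mul_inv, ← mul_assoc, mul_inv_cancel₀ (two_ne_zero), one_mul]
      calc ∑ r : R, ∑ S : Finset L, w S * (if bad r S then (1:ℝ) else 0)
          < ∑ _r : R, ((m:ℝ))⁻¹ :=
            Finset.sum_lt_sum_of_nonempty
              (by rw [← Finset.card_pos, Finset.card_univ]; omega)
              (fun r _ => per_r r)
        _ = 1 := by
            have hmne : (m:ℝ) ≠ 0 := by linarith
            rw [Finset.sum_const, Finset.card_univ, nsmul_eq_mul]
            exact mul_inv_cancel₀ hmne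
    -- extract a good subset S₀
    have hgood : ∃ S₀ : Finset L, ∀ r : R, ¬ bad r S₀ := by
      by_contra h
      push_neg at h
      have hge : ∀ S : Finset L, (1:ℝ) ≤ ((Finset.univ.filter (fun r => bad r S)).card : ℝ) := by
        intro S
        obtain ⟨r, hr⟩ := h S
        have hmem : r ∈ Finset.univ.filter (fun r => bad r S) :=
          Finset.mem_filter.mpr ⟨Finset.mem_univ r, hr⟩
        have hpos' : 0 < (Finset.univ.filter (fun r => bad r S)).card :=
          Finset.card_pos.mpr ⟨r, hmem⟩
        exact_mod_cast hpos'
      have hcontra : (1:ℝ)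
          ≤ ∑ S : Finset L, w S * ((Finset.univ.filter (fun r => bad r S)).card : ℝ) := by
        calc (1:ℝ) = ∑ S : Finset L, w S := hw_sum.symm
          _ ≤ _ := by
            apply Finset.sum_le_sum
            intro S _
            nlinarith [hw_nonneg S, hge S]
      linarith
    obtain ⟨S₀, hS₀⟩ := hgood
    have hS₀ne : ∀ r : R, N r ∩ S₀ ≠ ∅ := fun r h => hS₀ r (Or.inl h)
    have hS₀le : ∀ r : R, (N r ∩ S₀).card ≤ d' := by
      intro r
      by_contra h
      push_neg at h
      exact hS₀ r (Or.inr h)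
    -- Hall's theorem setup
    have hHall : ∀ A : Finset ({u // u ∈ S₀} × Fin s),
        A.card ≤ (A.biUnion (fun x => Finset.univ.filter (fun r => Adj x.1.1 r))).card := by
      intro A
      set D : Finset {u // u ∈ S₀} := A.image Prod.fst with hD_def
      have hAD : A.card ≤ D.card * s := by
        calc A.card ≤ (D ×ˢ (Finset.univ : Finset (Fin s))).card := by
              apply Finset.card_le_card
              intro x hx
              rw [Finset.mem_product]
              exact ⟨Finset.mem_image_of_mem _ hx, Finset.mem_univ _⟩
          _ = D.card * s := by rw [Finset.card_product, Finset.card_univ, Fintype.card_fin]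
      set ND : Finset R := D.biUnion (fun u => Finset.univ.filter (fun r => Adj u.1 r))
        with hND_def
      have hsub : ND ⊆ A.biUnion (fun x => Finset.univ.filter (fun r => Adj x.1.1 r)) := by
        intro r hr
        rw [hND_def, Finset.mem_biUnion] at hr
        rw [Finset.mem_biUnion]
        obtain ⟨u, hu, hru⟩ := hr
        rw [hD_def, Finset.mem_image] at hu
        obtain ⟨x, hx, hxu⟩ := hu
        refine ⟨x, hx, ?_⟩
        rw [hxu]
        exact hru
      have hcount : dL * D.card ≤ ND.card * d' := by
        have e1 : ∀ u ∈ D, (Finset.univ.filter (fun r => Adj u.1 r)).card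
            = ∑ r ∈ ND, (if Adj u.1 r then 1 else 0) := by
          intro u hu
          rw [← Finset.card_filter]
          congr 1
          ext r
          simp only [Finset.mem_filter, Finset.mem_univ, true_and, hND_def, Finset.mem_biUnion]
          constructor
          · intro h
            exact ⟨⟨u, hu, by simp [h]⟩, h⟩
          · intro h
            exact h.2
        have e2 : dL * D.card = ∑ u ∈ D, (Finset.univ.filter (fun r => Adj u.1 r)).card := by
          rw [Finset.sum_congr rfl (fun u _ => hdL u.1), Finset.sum_const, smul_eq_mul, mul_comm]
        have e4 : ∀ r : R, (∑ u ∈ D, if Adj u.1 r then 1 else 0) ≤ d' := by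
          intro r
          have e3 : ∑ u ∈ D, (if Adj u.1 r then 1 else 0)
              = (D.filter (fun u => Adj u.1 r)).card := by
            rw [Finset.card_filter]
          rw [e3]
          have hinj : ((D.filter (fun u => Adj u.1 r)).image Subtype.val).card
              = (D.filter (fun u => Adj u.1 r)).card :=
            Finset.card_image_of_injective _ Subtype.val_injective
          have himg : (D.filter (fun u => Adj u.1 r)).image Subtype.val ⊆ N r ∩ S₀ := by
            intro v hv
            rw [Finset.mem_image] at hv
            obtain ⟨u, hu, huv⟩ := hv
            rw [Finset.mem_filter] at hu
            rw [Finset.mem_inter]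
            constructor
            · rw [hN_app r, Finset.mem_filter]
              refine ⟨Finset.mem_univ v, ?_⟩
              rw [← huv]
              exact hu.2
            · rw [← huv]
              exact u.2
          calc (D.filter (fun u => Adj u.1 r)).card
              = ((D.filter (fun u => Adj u.1 r)).image Subtype.val).card := hinj.symm
            _ ≤ (N r ∩ S₀).card := Finset.card_le_card himg
            _ ≤ d' := hS₀le r
        rw [e2, Finset.sum_congr rfl e1, Finset.sum_comm]
        calc (∑ r ∈ ND, ∑ u ∈ D, if Adj u.1 r then 1 else 0)
            ≤ ∑ _r ∈ ND, d' := Finset.sum_le_sum (fun r _ => e4 r)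
          _ = ND.card * d' := by rw [Finset.sum_const, smul_eq_mul]
      have hfinal : D.card * s ≤ ND.card := by
        have h1 : (D.card * s) * d' ≤ ND.card * d' := by
          calc (D.card * s) * d' = D.card * (s * d') := by ring
            _ ≤ D.card * dL := Nat.mul_le_mul_left _ hsd'
            _ = dL * D.card := by ring
            _ ≤ ND.card * d' := hcount
        exact Nat.le_of_mul_le_mul_right h1 hd'_pos
      calc A.card ≤ D.card * s := hAD
        _ ≤ ND.card := hfinal
        _ ≤ _ := Finset.card_le_card hsub
    obtain ⟨g, hg_inj, hg_mem⟩ :=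
      (Finset.all_card_le_biUnion_card_iff_exists_injective
        (fun x : {u // u ∈ S₀} × Fin s => Finset.univ.filter (fun r => Adj x.1.1 r))).mp hHall
    have hg_adj : ∀ x : {u // u ∈ S₀} × Fin s, Adj x.1.1 (g x) := by
      intro x
      have h := hg_mem x
      rw [Finset.mem_filter] at h
      exact h.2
    have hpick : ∀ r : R, ∃ u, u ∈ N r ∩ S₀ :=
      fun r => Finset.nonempty_iff_ne_empty.mpr (hS₀ne r)
    set f : R → L := fun r =>
      if h : ∃ x : {u // u ∈ S₀} × Fin s, g x = r then h.choose.1.1 else (hpick r).choose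
      with hf_def
    have hf_app : ∀ r, f r =
        if h : ∃ x : {u // u ∈ S₀} × Fin s, g x = r then h.choose.1.1 else (hpick r).choose :=
      fun _ => rfl
    have hf_val : ∀ x : {u // u ∈ S₀} × Fin s, f (g x) = x.1.1 := by
      intro x
      rw [hf_app]
      split
      · next h =>
          exact congrArg (fun y : {u // u ∈ S₀} × Fin s => y.1.1) (hg_inj h.choose_spec)
      · next h => exact absurd ⟨x, rfl⟩ h
    have hf_adj : ∀ r, Adj (f r) r := by
      intro r
      rw [hf_app]
      split
      · next h =>
          have hspec := h.choose_spec
          have ha := hg_adj h.choose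
          rw [hspec] at ha
          exact ha
      · have hmem := (Finset.mem_inter.mp (hpick r).choose_spec).1
        exact (Finset.mem_filter.mp hmem).2
    have hf_mem : ∀ r, f r ∈ S₀ := by
      intro r
      rw [hf_app]
      split
      · next h => exact h.choose.1.2
      · exact (Finset.mem_inter.mp (hpick r).choose_spec).2
    refine ⟨f, hf_adj, ?_⟩
    rintro u ⟨r₀, hr₀⟩
    have hu_mem : u ∈ S₀ := hr₀ ▸ hf_mem r₀
    have hinj2 : Function.Injective (fun i : Fin s =>
        (⟨g (⟨u, hu_mem⟩, i), hf_val (⟨u, hu_mem⟩, i)⟩ : {r : R // f r = u})) := by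
      intro i j hij
      have h1 : g (⟨u, hu_mem⟩, i) = g (⟨u, hu_mem⟩, j) := congrArg Subtype.val hij
      have h2 := hg_inj h1
      exact congrArg Prod.snd h2
    have hcard : s ≤ Nat.card {r : R // f r = u} := by
      rw [Nat.card_eq_fintype_card]
      calc s = Fintype.card (Fin s) := (Fintype.card_fin s).symm
        _ ≤ Fintype.card {r : R // f r = u} := Fintype.card_le_of_injective _ hinj2
    calc (dL : ℝ) / (4 * lam) ≤ (s : ℝ) := hs_lb
      _ ≤ (Nat.card {r : R // f r = u} : ℝ) := by exact_mod_cast hcard
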